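/- Let R = ℂ[x_1,…,x_n], let I ⊆ R be an ideal and f ∈ R. Then f belongs to the local part IR_0 ∩ R of I at the origin (i.e., there exists s ∈ R with s(0) ≠ 0 and s·f ∈ I) if and only if ⟨q, f⟩ = 0 for every q in the Macaulay dual space D_0[I]. -/

import Mathlib

open MvPolynomial

noncomputable section

/-- Apolarity pairing `⟨q, f⟩ = ∑ α (coeff α q) * (coeff α f)`. -/
def apair {n : ℕ} (q f : MvPolynomial (Fin n) ℂ) : ℂ :=
  ∑ α ∈ q.support, q.coeff α * f.coeff α

lemma apair_eq_sum {n : ℕ} {q : MvPolynomial (Fin n) ℂ} {s : Finset (Fin n →₀ ℕ)}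
    (h : q.support ⊆ s) (f : MvPolynomial (Fin n) ℂ) :
    apair q f = ∑ α ∈ s, q.coeff α * f.coeff α :=
  Finset.sum_subset h (fun α _ hα => by
    rw [MvPolynomial.notMem_support_iff.mp hα, zero_mul])

/-- The Macaulay dual space `D_0[I]` of an ideal at the origin. -/
def dualSpace {n : ℕ} (I : Ideal (MvPolynomial (Fin n) ℂ)) :
    Submodule ℂ (MvPolynomial (Fin n) ℂ) where
  carrier := {q | ∀ f ∈ I, apair q f = 0}
  zero_mem' := by intro f hf; simp [apair]
  add_mem' := by
    intro a b ha hb f hf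
    have h : apair (a + b) f = apair a f + apair b f := by
      rw [apair_eq_sum (s := a.support ∪ b.support) MvPolynomial.support_add,
        apair_eq_sum (s := a.support ∪ b.support) Finset.subset_union_left,
        apair_eq_sum (s := a.support ∪ b.support) Finset.subset_union_right,
        ← Finset.sum_add_distrib]
      exact Finset.sum_congr rfl fun α _ => by rw [coeff_add, add_mul]
    rw [h, ha f hf, hb f hf, add_zero]
  smul_mem' := by
    intro c q hq f hf
    have h : apair (c • q) f = c * apair q f := by
      rw [apair_eq_sum (s := q.support) MvPolynomial.support_smul, apair, Finset.mul_sum]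
      exact Finset.sum_congr rfl fun α _ => by rw [coeff_smul, smul_eq_mul, mul_assoc]
    rw [h, hq f hf, mul_zero]

open scoped Classical in
/-- The contraction `g ∘ q`, realizing the action of `g` on differential functionals:
`coeff α (contract g q) = ∑ β, coeff β g * coeff (α + β) q`. -/
def contract {n : ℕ} (g q : MvPolynomial (Fin n) ℂ) : MvPolynomial (Fin n) ℂ :=
  ∑ β ∈ g.support, ∑ α ∈ q.support,
    if β ≤ α then monomial (α - β) (g.coeff β * q.coeff α) else 0

/-- The truncated dual space `D_0^k[I]`. -/
def truncDual {n : ℕ} (k : ℕ) (I : Ideal (MvPolynomial (Fin n) ℂ)) :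
    Submodule ℂ (MvPolynomial (Fin n) ℂ) where
  carrier := {q | q ∈ dualSpace I ∧ q.totalDegree ≤ k}
  zero_mem' := ⟨(dualSpace I).zero_mem, by simp⟩
  add_mem' := fun ha hb => ⟨(dualSpace I).add_mem ha.1 hb.1,
    le_trans (MvPolynomial.totalDegree_add _ _) (max_le ha.2 hb.2)⟩
  smul_mem' := fun c q hq => ⟨(dualSpace I).smul_mem c hq.1,
    le_trans (MvPolynomial.totalDegree_smul_le c q) hq.2⟩

/-! ### Auxiliary lemmas -/

section Aux

variable {n : ℕ}

local notation "R" => MvPolynomial (Fin n) ℂ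

lemma Finsupp.degree_add' (a b : Fin n →₀ ℕ) :
    Finsupp.degree (a + b) = Finsupp.degree a + Finsupp.degree b := by
  show (a + b).sum (fun _ e => e) = a.sum (fun _ e => e) + b.sum (fun _ e => e)
  exact Finsupp.sum_add_index' (fun _ => rfl) (fun _ _ _ => rfl)

lemma apair_zero_left (f : R) : apair 0 f = 0 := by simp [apair]

lemma apair_eq_sum_right (q f : R) :
    apair q f = ∑ α ∈ f.support, q.coeff α * f.coeff α := by
  rw [apair_eq_sum (s := q.support ∪ f.support) Finset.subset_union_left]
  exact (Finset.sum_subset Finset.subset_union_right (fun α _ hα => by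
    rw [MvPolynomial.notMem_support_iff.mp hα, mul_zero])).symm

lemma apair_comm (q f : R) : apair q f = apair f q := by
  rw [apair_eq_sum_right, apair]
  exact Finset.sum_congr rfl fun α _ => mul_comm _ _

lemma apair_add_left (a b f : R) : apair (a + b) f = apair a f + apair b f := by
  rw [apair_eq_sum (s := a.support ∪ b.support) MvPolynomial.support_add,
    apair_eq_sum (s := a.support ∪ b.support) Finset.subset_union_left,
    apair_eq_sum (s := a.support ∪ b.support) Finset.subset_union_right,
    ← Finset.sum_add_distrib]
  exact Finset.sum_congr rfl fun α _ => by rw [coeff_add, add_mul]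

lemma apair_sum_left {ι : Type*} (s : Finset ι) (g : ι → R) (f : R) :
    apair (∑ i ∈ s, g i) f = ∑ i ∈ s, apair (g i) f := by
  classical
  induction s using Finset.induction with
  | empty => simp [apair_zero_left]
  | insert _ _ h ih => rw [Finset.sum_insert h, Finset.sum_insert h, apair_add_left, ih]

lemma apair_sum_right {ι : Type*} (s : Finset ι) (g : ι → R) (f : R) :
    apair f (∑ i ∈ s, g i) = ∑ i ∈ s, apair f (g i) := by
  rw [apair_comm, apair_sum_left]
  exact Finset.sum_congr rfl fun i _ => apair_comm _ _

lemma apair_monomial_right (q : R) (δ : Fin n →₀ ℕ) (c : ℂ) :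
    apair q (monomial δ c) = q.coeff δ * c := by
  classical
  rw [apair_eq_sum_right]
  rcases eq_or_ne c 0 with rfl | hc
  · simp
  · rw [MvPolynomial.support_monomial, if_neg hc, Finset.sum_singleton, coeff_monomial, if_pos rfl]

/-- The maximal ideal at the origin. -/
def mId (n : ℕ) : Ideal (MvPolynomial (Fin n) ℂ) := Ideal.span (Set.range MvPolynomial.X)

lemma eval_zero_of_mem_mId {a : R} (ha : a ∈ mId n) : eval (0 : Fin n → ℂ) a = 0 := by
  have : mId n ≤ RingHom.ker (eval (0 : Fin n → ℂ)) := by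
    rw [mId, Ideal.span_le]
    rintro _ ⟨i, rfl⟩
    simp [RingHom.mem_ker]
  simpa [RingHom.mem_ker] using this ha

/-- Ideal of polynomials whose coefficients in degree `< k` vanish. -/
def Mlow (n k : ℕ) : Ideal (MvPolynomial (Fin n) ℂ) where
  carrier := {g | ∀ β : Fin n →₀ ℕ, Finsupp.degree β < k → g.coeff β = 0}
  zero_mem' := by intro β _; simp
  add_mem' := by
    intro a b ha hb β hβ
    rw [coeff_add, ha β hβ, hb β hβ, add_zero]
  smul_mem' := by
    classical
    intro c g hg β hβ
    rw [smul_eq_mul, coeff_mul]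
    refine Finset.sum_eq_zero fun uv huv => ?_
    rw [Finset.HasAntidiagonal.mem_antidiagonal] at huv
    have h2 : Finsupp.degree uv.2 ≤ Finsupp.degree β := by
      rw [← huv, Finsupp.degree_add']; omega
    rw [hg uv.2 (lt_of_le_of_lt h2 hβ), mul_zero]

lemma mem_Mlow {g : R} {k : ℕ} :
    g ∈ Mlow n k ↔ ∀ β : Fin n →₀ ℕ, Finsupp.degree β < k → g.coeff β = 0 := Iff.rfl

lemma Mlow_mul_Mlow {a b : ℕ} : Mlow n a * Mlow n b ≤ Mlow n (a + b) := by
  classical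
  rw [Ideal.mul_le]
  intro r hr s hs
  intro β hβ
  rw [coeff_mul]
  refine Finset.sum_eq_zero fun uv huv => ?_
  rw [Finset.HasAntidiagonal.mem_antidiagonal] at huv
  have hd : Finsupp.degree uv.1 + Finsupp.degree uv.2 < a + b := by
    rw [← Finsupp.degree_add', huv]; exact hβ
  rcases lt_or_ge (Finsupp.degree uv.1) a with h | h
  · rw [hr uv.1 h, zero_mul]
  · rw [hs uv.2 (by omega), mul_zero]

lemma mId_le_Mlow_one : mId n ≤ Mlow n 1 := by
  rw [mId, Ideal.span_le]
  rintro _ ⟨i, rfl⟩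
  intro β hβ
  have hβ0 : β = 0 := by
    rw [← Finsupp.degree_eq_zero_iff]; omega
  subst hβ0
  classical
  rw [MvPolynomial.coeff_zero_X]

lemma pow_mId_le_Mlow (k : ℕ) : mId n ^ k ≤ Mlow n k := by
  induction k with
  | zero =>
    intro g _
    intro β hβ; omega
  | succ k ih =>
    rw [pow_succ]
    calc mId n ^ k * mId n ≤ Mlow n k * Mlow n 1 :=
          Ideal.mul_mono ih mId_le_Mlow_one
      _ ≤ Mlow n (k + 1) := Mlow_mul_Mlow

lemma monomial_mem_pow_mId {α : Fin n →₀ ℕ} (c : ℂ) {k : ℕ} (hk : k ≤ Finsupp.degree α) :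
    (monomial α c : R) ∈ mId n ^ k := by
  classical
  induction k generalizing α with
  | zero => simp
  | succ k ih =>
    have hα : α ≠ 0 := by
      intro h; subst h; simp [map_zero] at hk
    obtain ⟨i, hi⟩ : ∃ i, α i ≠ 0 := by
      by_contra h
      push_neg at h
      exact hα (Finsupp.ext fun i => h i)
    have hle : Finsupp.single i 1 ≤ α := by
      intro j
      rcases eq_or_ne j i with rfl | hj
      · simpa [Finsupp.single_apply] using Nat.one_le_iff_ne_zero.mpr hi
      · simp [Finsupp.single_apply, Ne.symm hj]
    have heq : Finsupp.single i 1 + (α - Finsupp.single i 1) = α := by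
      ext j
      have := hle j
      simp only [Finsupp.coe_add, Pi.add_apply, Finsupp.coe_tsub, Pi.sub_apply]
      omega
    have hdeg : k ≤ Finsupp.degree (α - Finsupp.single i 1) := by
      have := Finsupp.degree_add' (Finsupp.single i 1) (α - Finsupp.single i 1)
      rw [heq] at this
      have hs : Finsupp.degree (Finsupp.single i (1:ℕ)) = 1 := by
        rw [Finsupp.degree_single]
      omega
    have : (monomial α c : R) = MvPolynomial.X i * monomial (α - Finsupp.single i 1) c := by
      rw [MvPolynomial.X, MvPolynomial.monomial_mul, one_mul, heq]
    rw [this, pow_succ']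
    exact Ideal.mul_mem_mul (Ideal.subset_span ⟨i, rfl⟩) (ih hdeg)

lemma mem_pow_mId_of_coeff {g : R} {k : ℕ}
    (h : ∀ β : Fin n →₀ ℕ, Finsupp.degree β < k → g.coeff β = 0) :
    g ∈ mId n ^ k := by
  classical
  rw [MvPolynomial.as_sum g]
  refine Submodule.sum_mem _ fun α hα => ?_
  refine monomial_mem_pow_mId _ ?_
  by_contra hlt
  exact MvPolynomial.mem_support_iff.mp hα (h α (by omega))

end Aux
section Contract

variable {n : ℕ}

local notation "R" => MvPolynomial (Fin n) ℂ

open scoped Classical in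
lemma coeff_contract (g q : R) (γ : Fin n →₀ ℕ) :
    (contract g q).coeff γ = ∑ β ∈ g.support, g.coeff β * q.coeff (γ + β) := by
  rw [contract, MvPolynomial.coeff_sum]
  refine Finset.sum_congr rfl fun β _ => ?_
  rw [MvPolynomial.coeff_sum]
  have key : ∀ α ∈ q.support,
      ((if β ≤ α then monomial (α - β) (g.coeff β * q.coeff α) else 0 : R)).coeff γ
        = if α = γ + β then g.coeff β * q.coeff α else 0 := by
    intro α _
    split_ifs with h1 h2 h3
    · subst h2
      rw [coeff_monomial, if_pos (add_tsub_cancel_right γ β)]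
    · rw [coeff_monomial, if_neg]
      intro he
      exact h2 (by rw [← he, tsub_add_cancel_of_le h1])
    · exfalso; apply h1; subst h3; exact le_add_self
    · simp
  rw [Finset.sum_congr rfl key, Finset.sum_ite_eq' q.support (γ + β)]
  split_ifs with h
  · rfl
  · rw [MvPolynomial.notMem_support_iff.mp h, mul_zero]

lemma contract_add_right (g a b : R) :
    contract g (a + b) = contract g a + contract g b := by
  apply MvPolynomial.ext
  intro γ
  simp only [coeff_contract, coeff_add, ← Finset.sum_add_distrib]
  exact Finset.sum_congr rfl fun β _ => by ring

lemma contract_smul_right (g : R) (c : ℂ) (q : R) :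
    contract g (c • q) = c • contract g q := by
  apply MvPolynomial.ext
  intro γ
  simp only [coeff_contract, coeff_smul, smul_eq_mul, Finset.mul_sum]
  exact Finset.sum_congr rfl fun β _ => by ring

lemma apair_contract (g q f : R) : apair (contract g q) f = apair q (g * f) := by
  classical
  have lhs : apair (contract g q) f
      = ∑ β ∈ g.support, ∑ γ ∈ f.support, g.coeff β * q.coeff (γ + β) * f.coeff γ := by
    rw [apair_eq_sum_right, Finset.sum_comm]
    refine Finset.sum_congr rfl fun γ _ => ?_
    rw [coeff_contract, Finset.sum_mul]
  have rhs : apair q (g * f)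
      = ∑ β ∈ g.support, ∑ γ ∈ f.support, q.coeff (β + γ) * (g.coeff β * f.coeff γ) := by
    conv_lhs => rw [MvPolynomial.as_sum g, MvPolynomial.as_sum f, Finset.sum_mul_sum]
    rw [apair_sum_right]
    refine Finset.sum_congr rfl fun β _ => ?_
    rw [apair_sum_right]
    refine Finset.sum_congr rfl fun γ _ => ?_
    rw [MvPolynomial.monomial_mul, apair_monomial_right]
  rw [lhs, rhs]
  refine Finset.sum_congr rfl fun β _ => Finset.sum_congr rfl fun γ _ => ?_
  rw [add_comm β γ]; ring

lemma contract_mem_dualSpace {I : Ideal R} (g : R) {q : R} (hq : q ∈ dualSpace I) :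
    contract g q ∈ dualSpace I := by
  intro f hf
  rw [apair_contract]
  exact hq _ (I.mul_mem_left g hf)

lemma totalDegree_contract_le {g q : R} {k : ℕ} (h : q.totalDegree ≤ k) :
    (contract g q).totalDegree ≤ k := by
  apply Finset.sup_le
  intro γ hγ
  by_contra hlt
  push_neg at hlt
  apply MvPolynomial.mem_support_iff.mp hγ
  rw [coeff_contract]
  refine Finset.sum_eq_zero fun β _ => ?_
  have hq0 : q.coeff (γ + β) = 0 := by
    apply MvPolynomial.coeff_eq_zero_of_totalDegree_lt
    calc q.totalDegree ≤ k := h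
      _ < γ.sum fun _ e => e := hlt
      _ ≤ ∑ i ∈ (γ + β).support, (γ + β) i := by
          show Finsupp.degree γ ≤ Finsupp.degree (γ + β)
          rw [Finsupp.degree_add']
          exact Nat.le_add_right _ _
  rw [hq0, mul_zero]

lemma contract_ne_zero {s q : R} (hs : s.coeff 0 ≠ 0) (hq : q ≠ 0) :
    contract s q ≠ 0 := by
  classical
  obtain ⟨α, hα, hαd⟩ : ∃ α ∈ q.support, (α.sum fun _ e => e) = q.totalDegree := by
    have hne : q.support.Nonempty := by
      rwa [Finset.nonempty_iff_ne_empty, Ne, MvPolynomial.support_eq_empty]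
    obtain ⟨α, hα, hd⟩ := Finset.exists_mem_eq_sup q.support hne (fun s => s.sum fun _ e => e)
    exact ⟨α, hα, hd.symm⟩
  have h1 : (contract s q).coeff α = s.coeff 0 * q.coeff (α + 0) := by
    rw [coeff_contract]
    refine Finset.sum_eq_single_of_mem 0 (MvPolynomial.mem_support_iff.mpr hs) ?_
    intro β _ hβ
    have hβd : 0 < Finsupp.degree β := by
      rcases Nat.eq_zero_or_pos (Finsupp.degree β) with h | h
      · exact absurd (Finsupp.degree_eq_zero_iff β |>.mp h) hβ
      · exact h
    have hq0 : q.coeff (α + β) = 0 := by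
      apply MvPolynomial.coeff_eq_zero_of_totalDegree_lt
      calc q.totalDegree = Finsupp.degree α := hαd.symm
        _ < Finsupp.degree (α + β) := by rw [Finsupp.degree_add']; omega
        _ = ∑ i ∈ (α + β).support, (α + β) i := rfl
    rw [hq0, mul_zero]
  intro hzero
  rw [hzero, MvPolynomial.coeff_zero, add_zero] at h1
  exact mul_ne_zero hs (MvPolynomial.mem_support_iff.mp hα) h1.symm

end Contract
section Main

variable {n : ℕ}

local notation "R" => MvPolynomial (Fin n) ℂ

lemma truncDual_le_restrict (k : ℕ) (I : Ideal R) :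
    truncDual k I ≤ restrictTotalDegree (Fin n) ℂ k :=
  fun _ hq => (mem_restrictTotalDegree _ _ _).mpr hq.2

instance truncDual_fd (k : ℕ) (I : Ideal R) : FiniteDimensional ℂ (truncDual k I) :=
  Submodule.finiteDimensional_of_le (truncDual_le_restrict k I)

/-- Contraction by `s` as a linear endomorphism of the truncated dual space. -/
def contractL (s : R) (k : ℕ) (I : Ideal R) : truncDual k I →ₗ[ℂ] truncDual k I where
  toFun q := ⟨contract s q.1, contract_mem_dualSpace s q.2.1, totalDegree_contract_le q.2.2⟩
  map_add' a b := Subtype.ext (contract_add_right s a.1 b.1)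
  map_smul' c a := Subtype.ext (contract_smul_right s c a.1)

lemma contractL_surjective {s : R} (hs : s.coeff 0 ≠ 0) (k : ℕ) (I : Ideal R) :
    Function.Surjective (contractL s k I) := by
  rw [← LinearMap.injective_iff_surjective]
  intro a b hab
  have hab' : contract s a.1 = contract s b.1 := congrArg Subtype.val hab
  have h : contract s (a.1 - b.1) = 0 := by
    have hsub : contract s (a.1 - b.1) = contract s a.1 - contract s b.1 := by
      apply MvPolynomial.ext
      intro γ
      simp only [coeff_contract, MvPolynomial.coeff_sub, mul_sub, Finset.sum_sub_distrib]
    rw [hsub, hab', sub_self]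
  by_contra hne
  exact contract_ne_zero hs (sub_ne_zero.mpr (fun h' => hne (Subtype.ext h'))) h

/-- Forward direction. -/
lemma forward {I : Ideal R} {f s : R} (hs0 : eval (0 : Fin n → ℂ) s ≠ 0) (hsf : s * f ∈ I) :
    ∀ q ∈ dualSpace I, apair q f = 0 := by
  intro q hq
  have hs : s.coeff 0 ≠ 0 := by
    rwa [show s.coeff 0 = eval (0 : Fin n → ℂ) s from by
      rw [MvPolynomial.eval_zero]; rfl]
  obtain ⟨p, hp⟩ := contractL_surjective hs q.totalDegree I ⟨q, hq, le_refl _⟩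
  have hp' : contract s p.1 = q := congrArg Subtype.val hp
  rw [← hp', apair_contract]
  exact p.2.1 _ hsf

end Main
section Backward

variable {n : ℕ}

set_option synthInstance.maxHeartbeats 1000000

local notation "R" => MvPolynomial (Fin n) ℂ

/-- The finite set of exponents of degree `< k`. -/
def Ak (n k : ℕ) : Finset (Fin n →₀ ℕ) :=
  (Finsupp.finite_of_degree_le k).toFinset.filter fun α => Finsupp.degree α < k

lemma mem_Ak {k : ℕ} {α : Fin n →₀ ℕ} : α ∈ Ak n k ↔ Finsupp.degree α < k := by
  simp only [Ak, Finset.mem_filter, Set.Finite.mem_toFinset, Set.mem_setOf_eq]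
  exact ⟨fun h => h.2, fun h => ⟨le_of_lt h, h⟩⟩

lemma apair_dualpoly (φ : Module.Dual ℂ (MvPolynomial (Fin n) ℂ)) (k : ℕ)
    (hφk : ∀ g ∈ mId n ^ k, φ g = 0) (g : R) :
    apair (∑ α ∈ Ak n k, monomial α (φ (monomial α 1))) g = φ g := by
  classical
  set q : R := ∑ α ∈ Ak n k, monomial α (φ (monomial α 1)) with hqdef
  have hcoeff : ∀ β ∈ Ak n k, q.coeff β = φ (monomial β 1) := by
    intro β hβ
    rw [hqdef, MvPolynomial.coeff_sum]
    rw [Finset.sum_eq_single_of_mem β hβ (fun α _ hα => by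
      rw [coeff_monomial, if_neg hα])]
    rw [coeff_monomial, if_pos rfl]
  have hsupp : q.support ⊆ Ak n k := by
    intro β hβ
    by_contra hb
    apply MvPolynomial.mem_support_iff.mp hβ
    rw [hqdef, MvPolynomial.coeff_sum]
    refine Finset.sum_eq_zero fun α hα => ?_
    rw [coeff_monomial, if_neg (fun h => hb (by rw [← h]; exact hα))]
  have key : apair q g = φ (∑ α ∈ Ak n k, monomial α (g.coeff α)) := by
    rw [apair_eq_sum hsupp, map_sum]
    refine Finset.sum_congr rfl fun α hα => ?_
    rw [hcoeff α hα, show (monomial α (g.coeff α) : R) = g.coeff α • monomial α 1 from by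
      rw [MvPolynomial.smul_monomial, smul_eq_mul, mul_one], map_smul, smul_eq_mul, mul_comm]
  have hrest : g - ∑ α ∈ Ak n k, monomial α (g.coeff α) ∈ mId n ^ k := by
    apply mem_pow_mId_of_coeff
    intro β hβ
    rw [MvPolynomial.coeff_sub, MvPolynomial.coeff_sum,
      Finset.sum_eq_single_of_mem β (mem_Ak.mpr hβ) (fun α _ hα => by
        rw [coeff_monomial, if_neg hα]),
      coeff_monomial, if_pos rfl, sub_self]
  have := hφk _ hrest
  rw [map_sub, sub_eq_zero] at this
  rw [key, ← this]

lemma mem_sup_pow_of_apair {I : Ideal R} {f : R}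
    (h : ∀ q ∈ dualSpace I, apair q f = 0) (k : ℕ) : f ∈ I ⊔ mId n ^ k := by
  by_contra hf
  have hf' : f ∉ Submodule.restrictScalars ℂ ((I ⊔ mId n ^ k : Ideal R) : Submodule _ _) := hf
  obtain ⟨φ, hφf, hφbot⟩ := Submodule.exists_dual_map_eq_bot_of_notMem hf' inferInstance
  have hφ0 : ∀ g ∈ (I ⊔ mId n ^ k : Ideal R), φ g = 0 := by
    intro g hg
    have : φ g ∈ Submodule.map φ (Submodule.restrictScalars ℂ
        ((I ⊔ mId n ^ k : Ideal R) : Submodule _ _)) := ⟨g, hg, rfl⟩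
    rwa [hφbot, Submodule.mem_bot] at this
  have hφk : ∀ g ∈ mId n ^ k, φ g = 0 := fun g hg =>
    hφ0 g (Ideal.mem_sup_right hg)
  set q : R := ∑ α ∈ Ak n k, monomial α (φ (monomial α 1)) with hqdef
  have hq : q ∈ dualSpace I := by
    intro g hg
    rw [apair_dualpoly φ k hφk]
    exact hφ0 g (Ideal.mem_sup_left hg)
  apply hφf
  rw [← apair_dualpoly φ k hφk f]
  exact h q hq

lemma backward {I : Ideal R} {f : R} (h : ∀ q ∈ dualSpace I, apair q f = 0) :
    ∃ s : R, eval (0 : Fin n → ℂ) s ≠ 0 ∧ s * f ∈ I := by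
  haveI : IsNoetherianRing (MvPolynomial (Fin n) ℂ) := MvPolynomial.isNoetherianRing_fin
  set mk := Ideal.Quotient.mk I with hmk
  set J : Ideal (MvPolynomial (Fin n) ℂ ⧸ I) := Ideal.map mk (mId n) with hJ
  have hx : mk f ∈ (⨅ i : ℕ, J ^ i • (⊤ : Submodule (MvPolynomial (Fin n) ℂ ⧸ I)
      (MvPolynomial (Fin n) ℂ ⧸ I))) := by
    rw [Submodule.mem_iInf]
    intro i
    rw [smul_eq_mul, Ideal.mul_top]
    obtain ⟨a, ha, b, hb, hab⟩ := Submodule.mem_sup.mp (mem_sup_pow_of_apair h i)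
    have : mk f = mk b := by
      rw [← hab, map_add, Ideal.Quotient.eq_zero_iff_mem.mpr ha, zero_add]
    rw [this, hJ, ← Ideal.map_pow]
    exact Ideal.mem_map_of_mem mk hb
  obtain ⟨r, hr⟩ := (Ideal.mem_iInf_smul_pow_eq_bot_iff J (mk f)).mp hx
  obtain ⟨a, ha, hamk⟩ := Ideal.mem_map_iff_of_surjective mk
    Ideal.Quotient.mk_surjective |>.mp r.2
  refine ⟨1 - a, ?_, ?_⟩
  · rw [map_sub, map_one, eval_zero_of_mem_mId ha, sub_zero]
    exact one_ne_zero
  · rw [← Ideal.Quotient.eq_zero_iff_mem, map_mul, map_sub, map_one, hamk]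
    have : (r : MvPolynomial (Fin n) ℂ ⧸ I) * mk f = mk f := by
      rw [← smul_eq_mul]; exact hr
    rw [sub_mul, one_mul, this, sub_self]

end Backward

/-- `f ∈ IR₀ ∩ R` (the local part of `I` at the origin) iff `⟨q, f⟩ = 0`
for every `q` in the Macaulay dual space `D_0[I]`. -/
theorem mem_localPart_iff_apair_eq_zero (n : ℕ) (I : Ideal (MvPolynomial (Fin n) ℂ))
    (f : MvPolynomial (Fin n) ℂ) :
    (∃ s : MvPolynomial (Fin n) ℂ, eval (0 : Fin n → ℂ) s ≠ 0 ∧ s * f ∈ I) ↔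
      ∀ q ∈ dualSpace I, apair q f = 0 := by
  constructor
  · rintro ⟨s, hs0, hsf⟩
    exact forward hs0 hsf
  · exact backward
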